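/- Let n ≥ 1 and k ≥ 1 be integers. For every x ∈ ℝⁿ with x ≠ 0, the k-fold iterated Laplacian of the logarithm of the norm satisfies Δ₀ᵏ (log ‖·‖)(x) = −2^{k−1} (k−1)! · (n−2)(n−4)⋯(n−2k) · ‖x‖^{−2k}. -/

import Mathlib

open MeasureTheory Real

/-- The geometric Laplacian `Δ₀ f = -∑ ∂²f/∂xᵢ²` on Euclidean space. -/
noncomputable def lap {n : ℕ} (f : EuclideanSpace ℝ (Fin n) → ℝ) :
    EuclideanSpace ℝ (Fin n) → ℝ :=
  fun x => - ∑ i : Fin n,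
    fderiv ℝ (fun y => fderiv ℝ f y (EuclideanSpace.single i 1)) x (EuclideanSpace.single i 1)

/-- The `k`-fold iterate `Δ₀ᵏ` of the geometric Laplacian. -/
noncomputable def lapIter {n : ℕ} (k : ℕ) :
    (EuclideanSpace ℝ (Fin n) → ℝ) → (EuclideanSpace ℝ (Fin n) → ℝ) :=
  lap^[k]

open scoped RealInnerProductSpace

variable {n : ℕ}

lemma lap_congr {f g : EuclideanSpace ℝ (Fin n) → ℝ} {x : EuclideanSpace ℝ (Fin n)}
    (h : f =ᶠ[nhds x] g) : lap f x = lap g x := by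
  unfold lap
  congr 1
  refine Finset.sum_congr rfl fun i _ => ?_
  have h1 : (fun y => fderiv ℝ f y (EuclideanSpace.single i 1)) =ᶠ[nhds x]
      (fun y => fderiv ℝ g y (EuclideanSpace.single i 1)) :=
    (Filter.EventuallyEq.fderiv (𝕜 := ℝ) h).mono fun y hy => by simp only [hy]
  rw [h1.fderiv_eq]

lemma inner_single (y : EuclideanSpace ℝ (Fin n)) (i : Fin n) :
    ⟪y, EuclideanSpace.single i 1⟫ = y i := by
  simp [PiLp.inner_apply, EuclideanSpace.single_apply]

/-- derivative of `z ↦ ⟪z,z⟫` -/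
noncomputable def innD (y : EuclideanSpace ℝ (Fin n)) : EuclideanSpace ℝ (Fin n) →L[ℝ] ℝ :=
  (fderivInnerCLM ℝ (y, y)).comp
    ((ContinuousLinearMap.id ℝ _).prod (ContinuousLinearMap.id ℝ _))

lemma innD_hasFDeriv (y : EuclideanSpace ℝ (Fin n)) :
    HasFDerivAt (fun z : EuclideanSpace ℝ (Fin n) => ⟪z, z⟫) (innD y) y :=
  (hasFDerivAt_id y).inner ℝ (hasFDerivAt_id y)

lemma innD_single (y : EuclideanSpace ℝ (Fin n)) (i : Fin n) :
    innD y (EuclideanSpace.single i 1) = 2 * y i := by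
  simp only [innD, ContinuousLinearMap.comp_apply, ContinuousLinearMap.prod_apply,
    ContinuousLinearMap.id_apply, fderivInnerCLM_apply]
  rw [inner_single, real_inner_comm, inner_single]
  ring

lemma lap_radial (φ φd φdd : ℝ → ℝ)
    (h1 : ∀ t : ℝ, 0 < t → HasDerivAt φ (φd t) t)
    (h2 : ∀ t : ℝ, 0 < t → HasDerivAt φd (φdd t) t)
    (x : EuclideanSpace ℝ (Fin n)) (hx : x ≠ 0) :
    lap (fun y : EuclideanSpace ℝ (Fin n) => φ ⟪y, y⟫) x =
      -(4 * ⟪x, x⟫ * φdd ⟪x, x⟫ + 2 * n * φd ⟪x, x⟫) := by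
  have hpos : ∀ y : EuclideanSpace ℝ (Fin n), y ≠ 0 → (0 : ℝ) < ⟪y, y⟫ := fun y hy => by
    rw [real_inner_self_eq_norm_sq]; exact pow_pos (norm_pos_iff.mpr hy) 2
  set t : ℝ := ⟪x, x⟫ with ht_def
  have ht : 0 < t := hpos x hx
  -- first derivative description on the open set y ≠ 0
  have hfd : ∀ y : EuclideanSpace ℝ (Fin n), y ≠ 0 →
      HasFDerivAt (fun z : EuclideanSpace ℝ (Fin n) => φ ⟪z, z⟫)
        (φd ⟪y, y⟫ • innD y) y := fun y hy => by
    have := HasDerivAt.comp_hasFDerivAt (f := fun z : EuclideanSpace ℝ (Fin n) => ⟪z, z⟫) y (h1 ⟪y, y⟫ (hpos y hy)) (innD_hasFDeriv y)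
    exact this
  have key : ∀ i : Fin n,
      fderiv ℝ (fun y => fderiv ℝ (fun z : EuclideanSpace ℝ (Fin n) => φ ⟪z, z⟫) y
        (EuclideanSpace.single i 1)) x (EuclideanSpace.single i 1)
      = 2 * φd t + 4 * φdd t * (x i) ^ 2 := by
    intro i
    have hev : (fun y => fderiv ℝ (fun z : EuclideanSpace ℝ (Fin n) => φ ⟪z, z⟫) y
          (EuclideanSpace.single i 1)) =ᶠ[nhds x]
        (fun y : EuclideanSpace ℝ (Fin n) => φd ⟪y, y⟫ * (2 * y i)) := by
      filter_upwards [IsOpen.mem_nhds isOpen_compl_singleton hx] with y hy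
      rw [(hfd y hy).fderiv]
      simp [innD_single]
    rw [hev.fderiv_eq]
    -- compute fderiv of y ↦ φd ⟪y,y⟫ * (2 * y i)
    have hA : HasFDerivAt (fun y : EuclideanSpace ℝ (Fin n) => φd ⟪y, y⟫)
        (φdd t • innD x) x := by
      have := HasDerivAt.comp_hasFDerivAt (f := fun z : EuclideanSpace ℝ (Fin n) => ⟪z, z⟫) x (h2 t ht) (innD_hasFDeriv x)
      exact this
    have hB : HasFDerivAt (fun y : EuclideanSpace ℝ (Fin n) => 2 * y i)
        ((2 : ℝ) • (EuclideanSpace.proj i : EuclideanSpace ℝ (Fin n) →L[ℝ] ℝ)) x := by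
      have := ((EuclideanSpace.proj i : EuclideanSpace ℝ (Fin n) →L[ℝ] ℝ).hasFDerivAt (x := x)).const_mul (2:ℝ)
      simp only [PiLp.proj_apply] at this
      exact this
    have hg : HasFDerivAt (fun y : EuclideanSpace ℝ (Fin n) => φd ⟪y, y⟫ * (2 * y i)) _ x := hA.mul hB
    rw [hg.fderiv]
    simp only [ContinuousLinearMap.add_apply, ContinuousLinearMap.smul_apply,
      innD_single, PiLp.proj_apply, EuclideanSpace.single_apply,
      smul_eq_mul]
    rw [← ht_def]
    norm_num
    ring
  unfold lap
  simp only [key]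
  rw [Finset.sum_add_distrib, Finset.sum_const, Finset.card_univ, Fintype.card_fin,
    ← Finset.mul_sum]
  have hsum : ∑ i : Fin n, (x i) ^ 2 = t := by
    rw [ht_def, PiLp.inner_apply]
    simp [RCLike.inner_apply, sq]
  rw [hsum]
  push_cast [nsmul_eq_mul]
  ring

lemma lap_log (x : EuclideanSpace ℝ (Fin n)) (hx : x ≠ 0) :
    lap (fun y : EuclideanSpace ℝ (Fin n) => Real.log ‖y‖) x =
      -((n : ℝ) - 2) * ‖x‖ ^ (-2 : ℝ) := by
  have hfun : (fun y : EuclideanSpace ℝ (Fin n) => Real.log ‖y‖) =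
      fun y : EuclideanSpace ℝ (Fin n) => Real.log ⟪y, y⟫ / 2 := by
    funext y
    rw [real_inner_self_eq_norm_sq, Real.log_pow]
    push_cast; ring
  rw [hfun, lap_radial (fun t => Real.log t / 2) (fun t => (2 * t)⁻¹)
    (fun t => -(2 * t ^ 2)⁻¹) ?_ ?_ x hx]
  · have ht : (0:ℝ) < ⟪x, x⟫ := by
      rw [real_inner_self_eq_norm_sq]; exact pow_pos (norm_pos_iff.mpr hx) 2
    rw [real_inner_self_eq_norm_sq] at *
    rw [Real.rpow_neg (norm_nonneg x), show ((2:ℝ) = ((2:ℕ):ℝ)) from by norm_num,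
      Real.rpow_natCast]
    field_simp
    ring
  · intro t ht
    have := (Real.hasDerivAt_log ht.ne').div_const 2
    exact this.congr_deriv (by ring)
  · intro t ht
    have h2t : HasDerivAt (fun s : ℝ => 2 * s) 2 t := by
      simpa using (hasDerivAt_id t).const_mul (2:ℝ)
    have := h2t.inv (by positivity)
    exact this.congr_deriv (by ring)

lemma lap_rpow (c a : ℝ) (x : EuclideanSpace ℝ (Fin n)) (hx : x ≠ 0) :
    lap (fun y : EuclideanSpace ℝ (Fin n) => c * ‖y‖ ^ a) x =
      (-(a * (a + n - 2)) * c) * ‖x‖ ^ (a - 2) := by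
  have hnorm : ∀ (y : EuclideanSpace ℝ (Fin n)) (b : ℝ), y ≠ 0 →
      ‖y‖ ^ b = (⟪y, y⟫ : ℝ) ^ (b / 2) := by
    intro y b hy
    rw [real_inner_self_eq_norm_sq, ← Real.rpow_natCast ‖y‖ 2,
      ← Real.rpow_mul (norm_nonneg y)]
    congr 1
    ring
  have hfun : (fun y : EuclideanSpace ℝ (Fin n) => c * ‖y‖ ^ a) =ᶠ[nhds x]
      fun y : EuclideanSpace ℝ (Fin n) => c * (⟪y, y⟫ : ℝ) ^ (a / 2) := by
    filter_upwards [IsOpen.mem_nhds isOpen_compl_singleton hx] with y hy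
    rw [hnorm y a hy]
  rw [lap_congr hfun, lap_radial (fun t => c * t ^ (a / 2))
      (fun t => c * (a / 2 * t ^ (a / 2 - 1)))
      (fun t => c * (a / 2 * ((a / 2 - 1) * t ^ (a / 2 - 2)))) ?_ ?_ x hx]
  · have ht : (0:ℝ) < ⟪x, x⟫ := by
      rw [real_inner_self_eq_norm_sq]; exact pow_pos (norm_pos_iff.mpr hx) 2
    rw [hnorm x (a - 2) hx]
    have e1 : (⟪x, x⟫ : ℝ) ^ (a / 2 - 2) = (⟪x, x⟫ : ℝ) ^ (a / 2 - 1) / ⟪x, x⟫ := by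
      rw [show a / 2 - 2 = (a / 2 - 1) - 1 by ring, Real.rpow_sub ht, Real.rpow_one]
    have e2 : (a - 2) / 2 = a / 2 - 1 := by ring
    rw [e1, e2]
    have hT : (⟪x, x⟫ : ℝ) ≠ 0 := ht.ne'
    set T : ℝ := (⟪x, x⟫ : ℝ) with hT_def
    field_simp
    ring
  · intro t ht
    exact (Real.hasDerivAt_rpow_const (Or.inl ht.ne')).const_mul c
  · intro t ht
    rw [show a / 2 - 2 = a / 2 - 1 - 1 by ring]
    exact ((Real.hasDerivAt_rpow_const (p := a / 2 - 1) (Or.inl ht.ne')).const_mul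
      (a / 2)).const_mul c

lemma aux_iter (n m : ℕ) : ∀ x : EuclideanSpace ℝ (Fin n), x ≠ 0 →
    lapIter (m + 1) (fun y => Real.log ‖y‖) x =
      -(2 ^ m * (Nat.factorial m) *
          ∏ j ∈ Finset.range (m + 1), ((n : ℝ) - 2 * (j + 1))) *
        ‖x‖ ^ (-(2 * ((m : ℝ) + 1))) := by
  induction m with
  | zero =>
    intro x hx
    simp only [lapIter, zero_add, Function.iterate_one]
    rw [lap_log x hx]
    norm_num [Finset.prod_range_one]
  | succ m ih =>
    intro x hx
    have hstep : lapIter (m + 1 + 1) (fun y : EuclideanSpace ℝ (Fin n) => Real.log ‖y‖) x =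
        lap (lapIter (m + 1) (fun y => Real.log ‖y‖)) x := by
      simp only [lapIter, Function.iterate_succ_apply']
    rw [hstep]
    have hev : lapIter (m + 1) (fun y : EuclideanSpace ℝ (Fin n) => Real.log ‖y‖) =ᶠ[nhds x]
        fun y : EuclideanSpace ℝ (Fin n) =>
          (-(2 ^ m * (Nat.factorial m) *
            ∏ j ∈ Finset.range (m + 1), ((n : ℝ) - 2 * (j + 1)))) *
            ‖y‖ ^ (-(2 * ((m : ℝ) + 1))) := by
      filter_upwards [IsOpen.mem_nhds isOpen_compl_singleton hx] with y hy
      exact ih y hy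
    rw [lap_congr hev, lap_rpow _ _ x hx]
    rw [show (-(2 * ((m : ℝ) + 1)) - 2) = -(2 * ((↑(m + 1) : ℝ) + 1)) by push_cast; ring]
    rw [Finset.prod_range_succ (fun j : ℕ => ((n : ℝ) - 2 * (j + 1))) (m + 1),
      pow_succ (2 : ℝ) m, Nat.factorial_succ]
    push_cast
    ring

theorem iterated_laplacian_of_log_norm
    (n k : ℕ) (hn : 1 ≤ n) (hk : 1 ≤ k) :
    ∀ x : EuclideanSpace ℝ (Fin n), x ≠ 0 →
      lapIter k (fun y => Real.log ‖y‖) x =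
        -(2 ^ (k - 1) * (Nat.factorial (k - 1)) *
            ∏ j ∈ Finset.range k, ((n : ℝ) - 2 * (j + 1))) *
          ‖x‖ ^ (-(2 * (k : ℝ))) := by
  obtain ⟨m, rfl⟩ : ∃ m, k = m + 1 := ⟨k - 1, by omega⟩
  intro x hx
  have h := aux_iter n m x hx
  simp only [Nat.add_sub_cancel]
  rw [h]
  push_cast
  ring
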